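/- Single-mode lower bound for the Gaussian-weighted least squares: for any p > 0, r ∈ ℂ, and real λ, θ, one has ∫ (1/(√(2π)T)) exp(-t²/(2T²)) |p e^{-iλt} - r e^{-iθt}|² dt = p² + |r|² - 2 p Re(r) exp(-T²(θ-λ)²/2) ≥ p²(1 - exp(-T²(θ-λ)²)). -/

import Mathlib

open MeasureTheory Complex

lemma remul_aux (x : ℝ) (z : ℂ) : ((x : ℂ) * z).re = x * z.re := by
  simp [Complex.mul_re]

lemma gauss_char (T μ : ℝ) (hT : 0 < T) :
    ∫ t : ℝ, ((1 / (Real.sqrt (2 * Real.pi) * T) * Real.exp (-t ^ 2 / (2 * T ^ 2)) : ℝ) : ℂ) *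
        Complex.exp (-Complex.I * μ * t)
      = (Real.exp (-T ^ 2 * μ ^ 2 / 2) : ℂ) := by
  have hb : (0:ℝ) < 1 / (2 * T ^ 2) := by positivity
  have hb' : (0:ℝ) < ((1 / (2 * T ^ 2) : ℝ) : ℂ).re := by rwa [Complex.ofReal_re]
  have hJ := fourierIntegral_gaussian (b := ((1 / (2 * T ^ 2) : ℝ) : ℂ)) hb' ((-μ : ℝ) : ℂ)
  have heq : ∀ t : ℝ,
      ((1 / (Real.sqrt (2 * Real.pi) * T) * Real.exp (-t ^ 2 / (2 * T ^ 2)) : ℝ) : ℂ) *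
        Complex.exp (-Complex.I * μ * t)
      = ((1 / (Real.sqrt (2 * Real.pi) * T) : ℝ) : ℂ) *
        (Complex.exp (Complex.I * ((-μ : ℝ) : ℂ) * t) *
          Complex.exp (-((1 / (2 * T ^ 2) : ℝ) : ℂ) * t ^ 2)) := by
    intro t
    rw [Complex.ofReal_mul, Complex.ofReal_exp, mul_assoc, ← Complex.exp_add, ← Complex.exp_add]
    congr 2
    push_cast
    ring
  simp_rw [heq]
  rw [integral_const_mul, hJ]
  have h1 : ((Real.pi : ℂ) / ((1 / (2 * T ^ 2) : ℝ) : ℂ)) ^ (1 / 2 : ℂ)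
      = ((Real.sqrt (2 * Real.pi) * T : ℝ) : ℂ) := by
    have h2 : ((Real.pi : ℂ) / ((1 / (2 * T ^ 2) : ℝ) : ℂ)) = ((2 * Real.pi * T ^ 2 : ℝ) : ℂ) := by
      push_cast
      field_simp
    rw [h2]
    have h3 : (1 / 2 : ℂ) = ((1 / 2 : ℝ) : ℂ) := by norm_num
    rw [h3, ← Complex.ofReal_cpow (by positivity), ← Real.sqrt_eq_rpow]
    congr 1
    rw [Real.sqrt_mul (by positivity), Real.sqrt_sq hT.le]
  have h4 : -(((-μ : ℝ) : ℂ)) ^ 2 / (4 * ((1 / (2 * T ^ 2) : ℝ) : ℂ))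
      = ((-T ^ 2 * μ ^ 2 / 2 : ℝ) : ℂ) := by
    have hne : ((2 * T ^ 2 : ℝ) : ℂ) ≠ 0 := by
      simp only [ne_eq, Complex.ofReal_eq_zero]
      positivity
    push_cast
    field_simp
    ring
  rw [h1, h4, ← Complex.ofReal_exp, ← Complex.ofReal_mul, ← Complex.ofReal_mul]
  congr 1
  have hne : Real.sqrt (2 * Real.pi) * T ≠ 0 := by positivity
  field_simp

theorem stmt_11 (T p lam θ : ℝ) (hT : 0 < T) (hp : 0 < p) (r : ℂ) :
    (∫ t : ℝ, (1 / (Real.sqrt (2 * Real.pi) * T)) * Real.exp (-t ^ 2 / (2 * T ^ 2)) *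
        ‖(p : ℂ) * Complex.exp (-Complex.I * lam * t)
          - r * Complex.exp (-Complex.I * θ * t)‖ ^ 2)
      = p ^ 2 + ‖r‖ ^ 2 - 2 * p * r.re * Real.exp (-T ^ 2 * (θ - lam) ^ 2 / 2) ∧
    p ^ 2 * (1 - Real.exp (-T ^ 2 * (θ - lam) ^ 2)) ≤
      p ^ 2 + ‖r‖ ^ 2 - 2 * p * r.re * Real.exp (-T ^ 2 * (θ - lam) ^ 2 / 2) := by
  set C : ℝ := 1 / (Real.sqrt (2 * Real.pi) * T) with hC
  set μ : ℝ := lam - θ with hμ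
  constructor
  · -- integral identity
    have key : ∀ t : ℝ,
        ‖(p : ℂ) * Complex.exp (-Complex.I * lam * t)
            - r * Complex.exp (-Complex.I * θ * t)‖ ^ 2
          = p ^ 2 + ‖r‖ ^ 2
            - 2 * p * ((starRingEnd ℂ) r * Complex.exp (-Complex.I * μ * t)).re := by
      intro t
      rw [← Complex.normSq_eq_norm_sq, ← Complex.normSq_eq_norm_sq, Complex.normSq_sub]
      have e1 : Complex.normSq ((p : ℂ) * Complex.exp (-Complex.I * lam * t)) = p ^ 2 := by
        rw [Complex.normSq_mul, Complex.normSq_eq_norm_sq, Complex.normSq_eq_norm_sq, Complex.norm_exp]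
        simp [pow_two]
      have e2 : Complex.normSq (r * Complex.exp (-Complex.I * θ * t)) = Complex.normSq r := by
        rw [Complex.normSq_mul, Complex.normSq_eq_norm_sq (Complex.exp _), Complex.norm_exp]
        simp
      rw [e1, e2]
      have hconj : (starRingEnd ℂ) (-Complex.I * θ * t) = Complex.I * θ * t := by
        simp [map_mul]
      have e3 : (p : ℂ) * Complex.exp (-Complex.I * lam * t) *
          (starRingEnd ℂ) (r * Complex.exp (-Complex.I * θ * t))
          = (p : ℂ) * ((starRingEnd ℂ) r * Complex.exp (-Complex.I * μ * t)) := by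
        rw [map_mul, ← Complex.exp_conj, hconj,
          show (p : ℂ) * Complex.exp (-Complex.I * lam * t) *
              ((starRingEnd ℂ) r * Complex.exp (Complex.I * θ * t))
            = (p : ℂ) * ((starRingEnd ℂ) r *
              (Complex.exp (-Complex.I * lam * t) * Complex.exp (Complex.I * θ * t))) from by ring,
          ← Complex.exp_add]
        congr 3
        push_cast [hμ]
        ring
      rw [e3, remul_aux, Complex.normSq_eq_norm_sq]
      ring
    have hgauss : Integrable fun t : ℝ => Real.exp (-(1 / (2 * T ^ 2)) * t ^ 2) :=
      integrable_exp_neg_mul_sq (by positivity)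
    have hrw : ∀ t : ℝ, Real.exp (-t ^ 2 / (2 * T ^ 2)) = Real.exp (-(1 / (2 * T ^ 2)) * t ^ 2) := by
      intro t; congr 1; ring
    have hcI : Integrable fun t : ℝ =>
        ((C * Real.exp (-t ^ 2 / (2 * T ^ 2)) : ℝ) : ℂ) * Complex.exp (-Complex.I * μ * t) := by
      have h0 := (integrable_cexp_quadratic (b := ((1 / (2 * T ^ 2) : ℝ) : ℂ))
        (by rw [Complex.ofReal_re]; positivity) (-Complex.I * μ) 0).const_mul ((C : ℝ) : ℂ)
      apply h0.congr
      apply Filter.Eventually.of_forall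
      intro t
      simp only [Complex.ofReal_mul, Complex.ofReal_exp]
      rw [mul_assoc ((C:ℝ):ℂ), ← Complex.exp_add]
      congr 2
      push_cast
      ring
    have hf1 : Integrable fun t : ℝ => C * Real.exp (-t ^ 2 / (2 * T ^ 2)) := by
      simp_rw [hrw]
      exact hgauss.const_mul C
    have hf2 : Integrable fun t : ℝ =>
        C * Real.exp (-t ^ 2 / (2 * T ^ 2)) *
          ((starRingEnd ℂ) r * Complex.exp (-Complex.I * μ * t)).re := by
      have h0 := (hcI.const_mul ((starRingEnd ℂ) r)).re
      apply h0.congr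
      apply Filter.Eventually.of_forall
      intro t
      simp only [RCLike.re_to_complex]
      rw [mul_left_comm, remul_aux]
    have split : (∫ t : ℝ, C * Real.exp (-t ^ 2 / (2 * T ^ 2)) *
        ‖(p : ℂ) * Complex.exp (-Complex.I * lam * t)
          - r * Complex.exp (-Complex.I * θ * t)‖ ^ 2)
      = (p ^ 2 + ‖r‖ ^ 2) * (∫ t : ℝ, C * Real.exp (-t ^ 2 / (2 * T ^ 2)))
        - 2 * p * (∫ t : ℝ, C * Real.exp (-t ^ 2 / (2 * T ^ 2)) *
            ((starRingEnd ℂ) r * Complex.exp (-Complex.I * μ * t)).re) := by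
      rw [← integral_const_mul, ← integral_const_mul, ← integral_sub (hf1.const_mul _)
        ((hf2.const_mul _))]
      congr 1
      ext t
      rw [key t]
      ring
    rw [split]
    have hs : Real.sqrt (2 * Real.pi * T ^ 2) = Real.sqrt (2 * Real.pi) * T := by
      rw [Real.sqrt_mul (by positivity), Real.sqrt_sq hT.le]
    have hI0 : (∫ t : ℝ, C * Real.exp (-t ^ 2 / (2 * T ^ 2))) = 1 := by
      simp_rw [hrw]
      rw [integral_const_mul, integral_gaussian,
        show Real.pi / (1 / (2 * T ^ 2)) = 2 * Real.pi * T ^ 2 by field_simp, hs, hC]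
      have hne : Real.sqrt (2 * Real.pi) * T ≠ 0 := by positivity
      field_simp
    have hIc : (∫ t : ℝ, C * Real.exp (-t ^ 2 / (2 * T ^ 2)) *
        ((starRingEnd ℂ) r * Complex.exp (-Complex.I * μ * t)).re)
        = r.re * Real.exp (-T ^ 2 * μ ^ 2 / 2) := by
      have step : ∀ t : ℝ, C * Real.exp (-t ^ 2 / (2 * T ^ 2)) *
          ((starRingEnd ℂ) r * Complex.exp (-Complex.I * μ * t)).re
          = ((starRingEnd ℂ) r * (((C * Real.exp (-t ^ 2 / (2 * T ^ 2)) : ℝ) : ℂ) *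
            Complex.exp (-Complex.I * μ * t))).re := by
        intro t
        rw [mul_left_comm, remul_aux]
      simp_rw [step]
      have h5 := integral_re (hcI.const_mul ((starRingEnd ℂ) r))
      simp only [RCLike.re_to_complex] at h5
      rw [h5, integral_const_mul, gauss_char T μ hT, mul_comm ((starRingEnd ℂ) r),
        remul_aux, Complex.conj_re]
      ring
    rw [hI0, hIc, show μ ^ 2 = (θ - lam) ^ 2 by rw [hμ]; ring]
    ring
  · -- inequality
    have hE : Real.exp (-T ^ 2 * (θ - lam) ^ 2) = Real.exp (-T ^ 2 * (θ - lam) ^ 2 / 2) ^ 2 := by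
      rw [← Real.exp_nat_mul]
      congr 1
      ring
    have habs : ‖r‖ ^ 2 = r.re ^ 2 + r.im ^ 2 := by
      rw [Complex.sq_norm, Complex.normSq_apply]; ring
    rw [hE, habs]
    nlinarith [sq_nonneg (r.re - p * Real.exp (-T ^ 2 * (θ - lam) ^ 2 / 2)), sq_nonneg r.im]
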